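/- Let ∑_{n=0}^∞ a_n be a series of real numbers with a_0 ≤ 0, such that a_n > 0 for infinitely many n and a_n ≤ 0 for infinitely many n, and suppose the series has at least two distinct type R λ-permutation sums (i.e., there exist type R λ-permutations σ_1, σ_2 with ∑ a_{σ_1(n)} ≠ ∑ a_{σ_2(n)}). Then the series satisfies both ST_P and ST_N. -/

import Mathlib

open Filter Finset

noncomputable section
open scoped Classical

/-- Partial sum of the series `∑ a n`: sum of the first `n` terms. -/
def partialSum (a : ℕ → ℝ) (n : ℕ) : ℝ := ∑ i ∈ Finset.range n, a i

/-- The series `∑ a n` converges to `L`. -/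
def ConvergesTo (a : ℕ → ℝ) (L : ℝ) : Prop :=
  Filter.Tendsto (partialSum a) Filter.atTop (nhds L)

/-- The series `∑ a n` converges. -/
def Converges (a : ℕ → ℝ) : Prop := ∃ L : ℝ, ConvergesTo a L

/-- The series `∑ a n` is conditionally divergent: it diverges, but some
rearrangement of it converges. -/
def CondDivergent (a : ℕ → ℝ) : Prop :=
  ¬ Converges a ∧ ∃ σ : Equiv.Perm ℕ, Converges (fun n => a (σ n))

/-- `σ` is a type R permutation of the series `∑ a n`: it preserves the relative
order of terms of the same sign. -/
def IsTypeR (a : ℕ → ℝ) (σ : Equiv.Perm ℕ) : Prop :=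
  ∀ i j : ℕ, σ i < σ j →
    ((0 < a (σ i) ∧ 0 < a (σ j)) ∨ (a (σ i) ≤ 0 ∧ a (σ j) ≤ 0)) → i < j

/-- The number of maximal integer intervals whose union is the finite set `s`
(= the number of `x ∈ s` with `x + 1 ∉ s`). -/
def blockCount (s : Finset ℕ) : ℕ := (s.filter (fun x => x + 1 ∉ s)).card

/-- `σ` has bounded block number `C`: at every stage `n`, the set
`σ '' {0, 1, …, n}` is a union of at most `C` maximal integer intervals. -/
def HasBBN (σ : Equiv.Perm ℕ) (C : ℕ) : Prop :=
  ∀ n : ℕ, blockCount ((Finset.range (n + 1)).image σ) ≤ C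

/-- `σ` is a type R λ-permutation of the series `∑ a n`: a type R permutation
with bounded block number whose rearranged series converges. -/
def IsTypeRLambda (a : ℕ → ℝ) (σ : Equiv.Perm ℕ) : Prop :=
  IsTypeR a σ ∧ (∃ C : ℕ, HasBBN σ C) ∧ Converges (fun n => a (σ n))

/-- The set of sums attainable by type R λ-permutations of `∑ a n`. -/
def ZR (a : ℕ → ℝ) : Set ℝ :=
  {r : ℝ | ∃ σ : Equiv.Perm ℕ, IsTypeRLambda a σ ∧ ConvergesTo (fun n => a (σ n)) r}

/-- The first element `p_i` of the `i`-th positive block `P_i` (blocks 1-indexed):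
the `i`-th index `n` with `a n > 0` which starts a maximal interval of positive terms. -/
def posStartIdx (a : ℕ → ℝ) (i : ℕ) : ℕ :=
  Nat.nth (fun n => 0 < a n ∧ (n = 0 ∨ a (n - 1) ≤ 0)) (i - 1)

/-- The last element `q_i` of the `i`-th positive block `P_i` (blocks 1-indexed). -/
def posEndIdx (a : ℕ → ℝ) (i : ℕ) : ℕ :=
  Nat.nth (fun n => 0 < a n ∧ a (n + 1) ≤ 0) (i - 1)

/-- The first element `n_i` of the `i`-th negative block `N_i` (blocks 1-indexed). -/
def negStartIdx (a : ℕ → ℝ) (i : ℕ) : ℕ :=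
  Nat.nth (fun n => a n ≤ 0 ∧ (n = 0 ∨ 0 < a (n - 1))) (i - 1)

/-- The last element `m_i` of the `i`-th negative block `N_i` (blocks 1-indexed). -/
def negEndIdx (a : ℕ → ℝ) (i : ℕ) : ℕ :=
  Nat.nth (fun n => a n ≤ 0 ∧ 0 < a (n + 1)) (i - 1)

/-- `S_{[P_i, P_j]}`: the sum of the terms of `∑ a n` lying in the positive blocks
`P_i ∪ ⋯ ∪ P_j` (interpreted as `0` when `j < i`). -/
def SP (a : ℕ → ℝ) (i j : ℕ) : ℝ :=
  if j < i then 0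
  else ∑ n ∈ Finset.Icc (posStartIdx a i) (posEndIdx a j), if 0 < a n then a n else 0

/-- `S_{[N_i, N_j]}`: the sum of the terms of `∑ a n` lying in the negative blocks
`N_i ∪ ⋯ ∪ N_j` (interpreted as `0` when `j < i`). -/
def SN (a : ℕ → ℝ) (i j : ℕ) : ℝ :=
  if j < i then 0
  else ∑ n ∈ Finset.Icc (negStartIdx a i) (negEndIdx a j), if a n ≤ 0 then a n else 0

/-- The substantial property on positive blocks. -/
def STP (a : ℕ → ℝ) : Prop :=
  ∃ k : ℕ, ∃ ε : ℝ, 0 < ε ∧ ∃ i0 : ℕ, ∀ i > i0, SP a i (i + k) ≥ ε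

/-- The substantial property on negative blocks. -/
def STN (a : ℕ → ℝ) : Prop :=
  ∃ k : ℕ, ∃ ε : ℝ, 0 < ε ∧ ∃ i0 : ℕ, ∀ i > i0, SN a i (i + k) ≤ -ε

namespace St11
variable (a : ℕ → ℝ)
def Qe (n : ℕ) : Prop := 0 < a n ∧ a (n+1) ≤ 0
def Re (n : ℕ) : Prop := a n ≤ 0 ∧ 0 < a (n+1)
def EE (i : ℕ) : ℕ := Nat.nth (Qe a) i
def FF (i : ℕ) : ℕ := Nat.nth (Re a) i
def pp (n : ℕ) : ℝ := if 0 < a n then a n else 0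
def np (n : ℕ) : ℝ := if a n ≤ 0 then a n else 0
def PS (x : ℕ) : ℝ := ∑ m ∈ Finset.range (x+1), pp a m
def NS (y : ℕ) : ℝ := ∑ m ∈ Finset.range (y+1), np a m

variable {a}

section Struct
variable (h0 : a 0 ≤ 0) (hQ : (setOf (Qe a)).Infinite) (hR : (setOf (Re a)).Infinite)

lemma Qe_infinite (hP : {n : ℕ | 0 < a n}.Infinite) (hN : {n : ℕ | a n ≤ 0}.Infinite) :
    (setOf (Qe a)).Infinite := by
  by_contra h
  rw [Set.not_infinite] at h
  obtain ⟨M, hM⟩ := h.bddAbove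
  obtain ⟨n₀, hn₀, hn₀M⟩ := hP.exists_gt M
  have key : ∀ t, 0 < a (n₀ + t) := by
    intro t
    induction t with
    | zero => exact hn₀
    | succ t ih =>
      by_contra hc
      push_neg at hc
      have : Qe a (n₀ + t) := ⟨ih, by rwa [← Nat.add_assoc] at hc⟩
      exact absurd (hM this) (by omega)
  obtain ⟨m, hm, hmM⟩ := hN.exists_gt n₀
  have := key (m - n₀)
  rw [Nat.add_sub_cancel' hmM.le] at this
  exact absurd hm (not_le.2 this)

lemma Re_infinite (hP : {n : ℕ | 0 < a n}.Infinite) (hN : {n : ℕ | a n ≤ 0}.Infinite) :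
    (setOf (Re a)).Infinite := by
  by_contra h
  rw [Set.not_infinite] at h
  obtain ⟨M, hM⟩ := h.bddAbove
  obtain ⟨n₀, hn₀, hn₀M⟩ := hN.exists_gt M
  have key : ∀ t, a (n₀ + t) ≤ 0 := by
    intro t
    induction t with
    | zero => exact hn₀
    | succ t ih =>
      by_contra hc
      push_neg at hc
      have : Re a (n₀ + t) := ⟨ih, by rwa [← Nat.add_assoc] at hc⟩
      exact absurd (hM this) (by omega)
  obtain ⟨m, hm, hmM⟩ := hP.exists_gt n₀
  have := key (m - n₀)
  rw [Nat.add_sub_cancel' hmM.le] at this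
  exact absurd hm (not_lt.2 this)

include h0 in
lemma count_Re_eq (n : ℕ) :
    Nat.count (Re a) n = Nat.count (Qe a) n + if 0 < a n then 1 else 0 := by
  induction n with
  | zero => simp [not_lt.2 h0]
  | succ n ih =>
    rw [Nat.count_succ, Nat.count_succ, ih]
    by_cases h1 : 0 < a n <;> by_cases h2 : 0 < a (n+1) <;>
      simp [Re, Qe, h1, h2, not_lt.1, not_lt.2, le_of_not_gt, not_le.2]

include h0 hQ hR in
lemma FF_lt_EE (i : ℕ) : FF a i < EE a i := by
  have hm : Qe a (EE a i) := Nat.nth_mem_of_infinite hQ i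
  have h1 : Nat.count (Re a) (EE a i) = i + 1 := by
    have hcn : Nat.count (Qe a) (EE a i) = i := Nat.count_nth_of_infinite hQ i
    rw [count_Re_eq h0, hcn, if_pos hm.1]
  exact Nat.nth_lt_of_lt_count (by omega)

include h0 hQ hR in
lemma EE_lt_FF_succ (i : ℕ) : EE a i < FF a (i+1) := by
  have hm : Re a (FF a (i+1)) := Nat.nth_mem_of_infinite hR (i+1)
  have h1 : Nat.count (Qe a) (FF a (i+1)) = i + 1 := by
    have := count_Re_eq h0 (a := a) (FF a (i+1))
    have hcn : Nat.count (Re a) (FF a (i+1)) = i + 1 := Nat.count_nth_of_infinite hR (i+1)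
    rw [hcn, if_neg (not_lt.2 hm.1)] at this
    omega
  exact Nat.nth_lt_of_lt_count (by omega)

lemma exists_Re_between {m M : ℕ} (hm : a m ≤ 0) (hM : 0 < a M) (hmM : m ≤ M) :
    ∃ t, Re a t ∧ m ≤ t ∧ t < M := by
  have hne : ((Finset.Icc m M).filter (fun u => a u ≤ 0)).Nonempty :=
    ⟨m, by simp [hm, hmM]⟩
  obtain ⟨t, htmem, htmax⟩ : ∃ t ∈ (Finset.Icc m M).filter (fun u => a u ≤ 0),
      ∀ u ∈ (Finset.Icc m M).filter (fun u => a u ≤ 0), u ≤ t :=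
    ⟨_, Finset.max'_mem _ hne, fun u hu => Finset.le_max' _ u hu⟩
  rw [Finset.mem_filter, Finset.mem_Icc] at htmem
  have htM : t < M := lt_of_le_of_ne htmem.1.2 (by rintro rfl; exact absurd hM (not_lt.2 htmem.2))
  refine ⟨t, ⟨htmem.2, ?_⟩, htmem.1.1, htM⟩
  by_contra hc
  push_neg at hc
  have : t + 1 ≤ t := htmax _ (by
    rw [Finset.mem_filter, Finset.mem_Icc]
    exact ⟨⟨by omega, by omega⟩, hc⟩)
  omega

lemma exists_Qe_between {m M : ℕ} (hm : 0 < a m) (hM : a M ≤ 0) (hmM : m ≤ M) :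
    ∃ t, Qe a t ∧ m ≤ t ∧ t < M := by
  have hne : ((Finset.Icc m M).filter (fun u => 0 < a u)).Nonempty :=
    ⟨m, by simp [hm, hmM]⟩
  obtain ⟨t, htmem, htmax⟩ : ∃ t ∈ (Finset.Icc m M).filter (fun u => 0 < a u),
      ∀ u ∈ (Finset.Icc m M).filter (fun u => 0 < a u), u ≤ t :=
    ⟨_, Finset.max'_mem _ hne, fun u hu => Finset.le_max' _ u hu⟩
  rw [Finset.mem_filter, Finset.mem_Icc] at htmem
  have htM : t < M := lt_of_le_of_ne htmem.1.2 (by rintro rfl; exact absurd htmem.2 (not_lt.2 hM))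
  refine ⟨t, ⟨htmem.2, ?_⟩, htmem.1.1, htM⟩
  by_contra hc
  push_neg at hc
  have : t + 1 ≤ t := htmax _ (by
    rw [Finset.mem_filter, Finset.mem_Icc]
    exact ⟨⟨by omega, by omega⟩, hc⟩)
  omega

include h0 hQ hR in
/-- Sign lemma: indices strictly between `EE i` and `FF (i+1)` (inclusive) are nonpositive. -/
lemma sign_N {i m : ℕ} (h1 : EE a i < m) (h2 : m ≤ FF a (i+1)) : a m ≤ 0 := by
  by_contra hc
  push_neg at hc
  have hM : a (FF a (i+1)) ≤ 0 := (Nat.nth_mem_of_infinite hR (i+1)).1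
  obtain ⟨t, htQ, hmt, htM⟩ := exists_Qe_between hc hM h2
  have h3 : EE a i < t := lt_of_lt_of_le h1 hmt
  have h4 : i < Nat.count (Qe a) t := (Nat.lt_nth_iff_count_lt hQ).2 h3
  have h5 : EE a (i+1) ≤ t := by
    have := Nat.nth_count htQ
    calc EE a (i+1) ≤ Nat.nth (Qe a) (Nat.count (Qe a) t) :=
            (Nat.nth_le_nth hQ).2 (by omega)
      _ = t := this
  have := FF_lt_EE h0 hQ hR (i+1)
  omega

include h0 hQ hR in
/-- Sign lemma: indices strictly between `FF i` and `EE i` (inclusive) are positive. -/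
lemma sign_P {i m : ℕ} (h1 : FF a i < m) (h2 : m ≤ EE a i) : 0 < a m := by
  by_contra hc
  push_neg at hc
  have hM : 0 < a (EE a i) := (Nat.nth_mem_of_infinite hQ i).1
  obtain ⟨t, htR, hmt, htM⟩ := exists_Re_between hc hM h2
  have h3 : FF a i < t := lt_of_lt_of_le h1 hmt
  have h4 : i < Nat.count (Re a) t := (Nat.lt_nth_iff_count_lt hR).2 h3
  have h5 : FF a (i+1) ≤ t := by
    have := Nat.nth_count htR
    calc FF a (i+1) ≤ Nat.nth (Re a) (Nat.count (Re a) t) :=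
            (Nat.nth_le_nth hR).2 (by omega)
      _ = t := this
  have := EE_lt_FF_succ h0 hQ hR i
  omega

include h0 hQ hR in
/-- Sign lemma: indices up to `FF 0` are nonpositive. -/
lemma sign_N0 {m : ℕ} (h2 : m ≤ FF a 0) : a m ≤ 0 := by
  by_contra hc
  push_neg at hc
  have hM : a (FF a 0) ≤ 0 := (Nat.nth_mem_of_infinite hR 0).1
  obtain ⟨t, htQ, hmt, htM⟩ := exists_Qe_between hc hM h2
  have h5 : EE a 0 ≤ t := by
    have := Nat.nth_count htQ
    calc EE a 0 ≤ Nat.nth (Qe a) (Nat.count (Qe a) t) := (Nat.nth_le_nth hQ).2 (by omega)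
      _ = t := this
  have := FF_lt_EE h0 hQ hR 0
  omega


variable (h0 : a 0 ≤ 0) (hQ : (setOf (Qe a)).Infinite) (hR : (setOf (Re a)).Infinite)

-- identification of block starts
include h0 in
lemma count_Qs (n : ℕ) :
    Nat.count (fun n => 0 < a n ∧ (n = 0 ∨ a (n - 1) ≤ 0)) (n+1) = Nat.count (Re a) n := by
  induction n with
  | zero => simp [Nat.count_succ, not_lt.2 h0]
  | succ n ih =>
    rw [Nat.count_succ, ih, Nat.count_succ]
    by_cases h1 : a n ≤ 0 <;> by_cases h2 : 0 < a (n+1) <;>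
      simp [Re, h1, h2, not_lt.1, le_of_not_gt]

include h0 in
lemma count_Rs (n : ℕ) :
    Nat.count (fun n => a n ≤ 0 ∧ (n = 0 ∨ 0 < a (n - 1))) (n+1) = Nat.count (Qe a) n + 1 := by
  induction n with
  | zero => simp [Nat.count_succ, h0]
  | succ n ih =>
    rw [Nat.count_succ, ih, Nat.count_succ (p := Qe a)]
    by_cases h1 : 0 < a n <;> by_cases h2 : a (n+1) ≤ 0 <;>
      simp [Qe, h1, h2, not_lt.1, le_of_not_gt] <;> omega

include h0 hR in
lemma posStart_eq (i : ℕ) : posStartIdx a (i+1) = FF a i + 1 := by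
  have hmem : Re a (FF a i) := Nat.nth_mem_of_infinite hR i
  have hq : (fun n => 0 < a n ∧ (n = 0 ∨ a (n - 1) ≤ 0)) (FF a i + 1) :=
    ⟨hmem.2, Or.inr (by simpa using hmem.1)⟩
  have hc : Nat.count (fun n => 0 < a n ∧ (n = 0 ∨ a (n - 1) ≤ 0)) (FF a i + 1) = i := by
    rw [count_Qs h0]
    exact Nat.count_nth_of_infinite hR i
  have := Nat.nth_count (p := fun n => 0 < a n ∧ (n = 0 ∨ a (n - 1) ≤ 0)) hq
  rw [hc] at this
  exact this

include h0 hQ in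
lemma negStart_eq (i : ℕ) : negStartIdx a (i+2) = EE a i + 1 := by
  have hmem : Qe a (EE a i) := Nat.nth_mem_of_infinite hQ i
  have hq : (fun n => a n ≤ 0 ∧ (n = 0 ∨ 0 < a (n - 1))) (EE a i + 1) :=
    ⟨hmem.2, Or.inr (by simpa using hmem.1)⟩
  have hc : Nat.count (fun n => a n ≤ 0 ∧ (n = 0 ∨ 0 < a (n - 1))) (EE a i + 1) = i + 1 := by
    rw [count_Rs h0]
    have hcn : Nat.count (Qe a) (EE a i) = i := Nat.count_nth_of_infinite hQ i
    omega
  have := Nat.nth_count (p := fun n => a n ≤ 0 ∧ (n = 0 ∨ 0 < a (n - 1))) hq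
  rw [hc] at this
  exact this

lemma posEnd_eq (i : ℕ) : posEndIdx a (i+1) = EE a i := rfl
lemma negEnd_eq (i : ℕ) : negEndIdx a (i+1) = FF a i := rfl

include h0 hQ hR in
lemma SP_eq (i k : ℕ) :
    SP a (i+2) (i+2+k) = ∑ m ∈ Finset.Ioc (EE a i) (EE a (i+1+k)), pp a m := by
  have h1 : posStartIdx a (i+2) = FF a (i+1) + 1 := posStart_eq h0 hR (i+1)
  have h2 : posEndIdx a (i+2+k) = EE a (i+1+k) := by
    have : i+2+k = (i+1+k)+1 := by omega
    rw [this, posEnd_eq]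
  rw [SP, if_neg (by omega), h1, h2]
  have hle1 : EE a i ≤ FF a (i+1) := (EE_lt_FF_succ h0 hQ hR i).le
  have hle2 : FF a (i+1) ≤ EE a (i+1+k) := le_trans (FF_lt_EE h0 hQ hR (i+1)).le
    ((Nat.nth_le_nth hQ (k := i+1) (n := i+1+k)).2 (by omega))
  rw [← Finset.sum_Ioc_consecutive _ hle1 hle2]
  have hz : ∑ m ∈ Finset.Ioc (EE a i) (FF a (i+1)), pp a m = 0 := by
    apply Finset.sum_eq_zero
    intro m hm
    rw [Finset.mem_Ioc] at hm
    exact if_neg (not_lt.2 (sign_N h0 hQ hR hm.1 hm.2))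
  rw [hz, zero_add, Finset.Icc_add_one_left_eq_Ioc]
  rfl

include h0 hQ hR in
lemma SN_eq (i k : ℕ) :
    SN a (i+2) (i+2+k) = ∑ m ∈ Finset.Ioc (FF a i) (FF a (i+1+k)), np a m := by
  have h1 : negStartIdx a (i+2) = EE a i + 1 := negStart_eq h0 hQ i
  have h2 : negEndIdx a (i+2+k) = FF a (i+1+k) := by
    have : i+2+k = (i+1+k)+1 := by omega
    rw [this, negEnd_eq]
  rw [SN, if_neg (by omega), h1, h2]
  have hle1 : FF a i ≤ EE a i := (FF_lt_EE h0 hQ hR i).le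
  have hle2 : EE a i ≤ FF a (i+1+k) := le_trans (EE_lt_FF_succ h0 hQ hR i).le
    ((Nat.nth_le_nth hR (k := i+1) (n := i+1+k)).2 (by omega))
  rw [← Finset.sum_Ioc_consecutive _ hle1 hle2]
  have hz : ∑ m ∈ Finset.Ioc (FF a i) (EE a i), np a m = 0 := by
    apply Finset.sum_eq_zero
    intro m hm
    rw [Finset.mem_Ioc] at hm
    exact if_neg (not_le.2 (sign_P h0 hQ hR hm.1 hm.2))
  rw [hz, zero_add, Finset.Icc_add_one_left_eq_Ioc]
  rfl

end Struct

/-! ### Permutation side -/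

def sset (σ : Equiv.Perm ℕ) (n : ℕ) : Finset ℕ := (Finset.range (n+1)).image ⇑σ

lemma mem_sset {σ : Equiv.Perm ℕ} {n m : ℕ} : m ∈ sset σ n ↔ ∃ t ≤ n, σ t = m := by
  simp [sset, Nat.lt_succ_iff]

lemma card_sset (σ : Equiv.Perm ℕ) (n : ℕ) : (sset σ n).card = n + 1 := by
  rw [sset, Finset.card_image_of_injective _ σ.injective, Finset.card_range]

lemma isneg {σ : Equiv.Perm ℕ} (hR : IsTypeR a σ) {n u v : ℕ} (hu : a u ≤ 0) (hv : a v ≤ 0)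
    (huv : u ≤ v) (hmem : v ∈ sset σ n) : u ∈ sset σ n := by
  rcases eq_or_lt_of_le huv with rfl | hlt
  · exact hmem
  obtain ⟨t, htn, hts⟩ := mem_sset.1 hmem
  refine mem_sset.2 ⟨σ.symm u, ?_, σ.apply_symm_apply u⟩
  have : σ.symm u < t := by
    apply hR
    · rw [σ.apply_symm_apply, hts]; exact hlt
    · rw [σ.apply_symm_apply, hts]; exact Or.inr ⟨hu, hv⟩
  omega

lemma ispos {σ : Equiv.Perm ℕ} (hR : IsTypeR a σ) {n u v : ℕ} (hu : 0 < a u) (hv : 0 < a v)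
    (huv : u ≤ v) (hmem : v ∈ sset σ n) : u ∈ sset σ n := by
  rcases eq_or_lt_of_le huv with rfl | hlt
  · exact hmem
  obtain ⟨t, htn, hts⟩ := mem_sset.1 hmem
  refine mem_sset.2 ⟨σ.symm u, ?_, σ.apply_symm_apply u⟩
  have : σ.symm u < t := by
    apply hR
    · rw [σ.apply_symm_apply, hts]; exact hlt
    · rw [σ.apply_symm_apply, hts]; exact Or.inl ⟨hu, hv⟩
  omega

lemma sum_sset (σ : Equiv.Perm ℕ) (n : ℕ) :
    partialSum (fun k => a (σ k)) (n+1) = ∑ m ∈ sset σ n, a m := by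
  rw [partialSum, sset, Finset.sum_image (fun x _ y _ h => σ.injective h)]

lemma hit_neg {σ : Equiv.Perm ℕ} (hR : IsTypeR a σ) {w : ℕ} (hw : a w ≤ 0) :
    ∃ n, ∀ m, a m ≤ 0 → (m ∈ sset σ n ↔ m ≤ w) := by
  have hex : ∃ n, w ∈ sset σ n := ⟨σ.symm w, mem_sset.2 ⟨σ.symm w, le_rfl, σ.apply_symm_apply w⟩⟩
  refine ⟨Nat.find hex, fun m hm => ⟨fun hmem => ?_, fun hmw => isneg hR hm hw hmw (Nat.find_spec hex)⟩⟩
  by_contra hc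
  push_neg at hc
  have hwm : w < m := hc
  rcases Nat.eq_zero_or_pos (Nat.find hex) with hz | hpos
  · rw [hz] at hmem
    have hw' := Nat.find_spec hex
    rw [hz] at hw'
    obtain ⟨t, ht, hts⟩ := mem_sset.1 hmem
    obtain ⟨t', ht', hts'⟩ := mem_sset.1 hw'
    interval_cases t
    interval_cases t'
    rw [hts] at hts'
    omega
  · obtain ⟨n', hfind⟩ : ∃ n', Nat.find hex = n' + 1 := ⟨Nat.find hex - 1, by omega⟩
    rw [hfind] at hmem
    have hnot : w ∉ sset σ n' := Nat.find_min hex (by omega)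
    obtain ⟨t, ht, hts⟩ := mem_sset.1 hmem
    rcases Nat.lt_or_ge t (n'+1) with ht' | ht'
    · exact hnot (isneg hR hw hm hwm.le (mem_sset.2 ⟨t, by omega, hts⟩))
    · have htn : t = n' + 1 := by omega
      have hws := Nat.find_spec hex
      rw [hfind] at hws
      obtain ⟨t', ht2, hts'⟩ := mem_sset.1 hws
      have : t' ≠ t := by
        intro h; rw [h, hts] at hts'; omega
      exact hnot (mem_sset.2 ⟨t', by omega, hts'⟩)

lemma hit_pos {σ : Equiv.Perm ℕ} (hR : IsTypeR a σ) {w : ℕ} (hw : 0 < a w) :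
    ∃ n, ∀ m, 0 < a m → (m ∈ sset σ n ↔ m ≤ w) := by
  have hex : ∃ n, w ∈ sset σ n := ⟨σ.symm w, mem_sset.2 ⟨σ.symm w, le_rfl, σ.apply_symm_apply w⟩⟩
  refine ⟨Nat.find hex, fun m hm => ⟨fun hmem => ?_, fun hmw => ispos hR hm hw hmw (Nat.find_spec hex)⟩⟩
  by_contra hc
  push_neg at hc
  have hwm : w < m := hc
  rcases Nat.eq_zero_or_pos (Nat.find hex) with hz | hpos
  · rw [hz] at hmem
    have hw' := Nat.find_spec hex
    rw [hz] at hw'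
    obtain ⟨t, ht, hts⟩ := mem_sset.1 hmem
    obtain ⟨t', ht', hts'⟩ := mem_sset.1 hw'
    interval_cases t
    interval_cases t'
    rw [hts] at hts'
    omega
  · obtain ⟨n', hfind⟩ : ∃ n', Nat.find hex = n' + 1 := ⟨Nat.find hex - 1, by omega⟩
    rw [hfind] at hmem
    have hnot : w ∉ sset σ n' := Nat.find_min hex (by omega)
    obtain ⟨t, ht, hts⟩ := mem_sset.1 hmem
    rcases Nat.lt_or_ge t (n'+1) with ht' | ht'
    · exact hnot (ispos hR hw hm hwm.le (mem_sset.2 ⟨t, by omega, hts⟩))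
    · have htn : t = n' + 1 := by omega
      have hws := Nat.find_spec hex
      rw [hfind] at hws
      obtain ⟨t', ht2, hts'⟩ := mem_sset.1 hws
      have : t' ≠ t := by
        intro h; rw [h, hts] at hts'; omega
      exact hnot (mem_sset.2 ⟨t', by omega, hts'⟩)


section Stage
variable (h0 : a 0 ≤ 0) (hQ : (setOf (Qe a)).Infinite) (hR : (setOf (Re a)).Infinite)

include h0 hQ hR in
lemma stage_decomp_P {σ : Equiv.Perm ℕ} (hTR : IsTypeR a σ) {C : ℕ} (hB : HasBBN σ C)
    (hC : 1 ≤ C) {n j : ℕ} (hj : C + 1 ≤ j)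
    (hstage : ∀ m, a m ≤ 0 → (m ∈ sset σ n ↔ m ≤ FF a j)) :
    ∃ x, 0 < a x ∧ EE a (j - C - 1) < x ∧ x ≤ EE a (j + C) ∧
      (∑ m ∈ sset σ n, a m) = PS a x + NS a (FF a j) := by
  have hBn : blockCount (sset σ n) ≤ C := hB n
  have hlow : ∃ x ∈ sset σ n, 0 < a x ∧ EE a (j - C - 1) < x := by
    by_contra hcon
    push_neg at hcon
    have hsub : (Finset.Icc (j - C) j).image (FF a) ⊆
        (sset σ n).filter (fun v => v + 1 ∉ sset σ n) := by
      intro v hv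
      simp only [Finset.mem_image, Finset.mem_Icc] at hv
      obtain ⟨b, hb, rfl⟩ := hv
      rw [Finset.mem_filter]
      refine ⟨(hstage _ (Nat.nth_mem_of_infinite hR b).1).2 ((Nat.nth_le_nth hR).2 hb.2), ?_⟩
      intro hmem
      have hpos : 0 < a (FF a b + 1) :=
        sign_P h0 hQ hR (Nat.lt_succ_self _) (Nat.succ_le_of_lt (FF_lt_EE h0 hQ hR b))
      have h4 := hcon _ hmem hpos
      have h5 : EE a (j - C - 1) < FF a (j - C) := by
        have h := EE_lt_FF_succ h0 hQ hR (j - C - 1)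
        have heq : j - C - 1 + 1 = j - C := by omega
        rwa [heq] at h
      have h6 : FF a (j - C) ≤ FF a b := (Nat.nth_le_nth hR).2 (by omega)
      omega
    have hcard : C + 1 ≤ blockCount (sset σ n) := by
      calc C + 1 = ((Finset.Icc (j - C) j).image (FF a)).card := by
            rw [Finset.card_image_of_injective _ (show Function.Injective (FF a) from Nat.nth_injective hR), Nat.card_Icc]; omega
        _ ≤ _ := Finset.card_le_card hsub
    omega
  obtain ⟨x₀, hx₀s, hx₀p, hx₀low⟩ := hlow
  have hne : ((sset σ n).filter (fun m => 0 < a m)).Nonempty :=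
    ⟨x₀, Finset.mem_filter.2 ⟨hx₀s, hx₀p⟩⟩
  obtain ⟨x, hxmem, hxmax⟩ : ∃ x ∈ (sset σ n).filter (fun m => 0 < a m),
      ∀ u ∈ (sset σ n).filter (fun m => 0 < a m), u ≤ x :=
    ⟨_, Finset.max'_mem _ hne, fun u hu => Finset.le_max' _ u hu⟩
  rw [Finset.mem_filter] at hxmem
  obtain ⟨hxs, hxp⟩ := hxmem
  have hxlow : EE a (j - C - 1) < x :=
    lt_of_lt_of_le hx₀low (hxmax x₀ (Finset.mem_filter.2 ⟨hx₀s, hx₀p⟩))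
  have hxhigh : x ≤ EE a (j + C) := by
    by_contra hcon
    push_neg at hcon
    have hsub : insert x ((Finset.Icc (j+1) (j+C)).image (EE a)) ⊆
        (sset σ n).filter (fun v => v + 1 ∉ sset σ n) := by
      intro v hv
      rw [Finset.mem_insert] at hv
      rcases hv with rfl | hv
      · rw [Finset.mem_filter]
        refine ⟨hxs, fun hmem => ?_⟩
        rcases lt_or_ge 0 (a (v+1)) with hp | hp
        · have := hxmax _ (Finset.mem_filter.2 ⟨hmem, hp⟩); omega
        · have h7 := (hstage _ hp).1 hmem
          have h8 : FF a j < EE a j := FF_lt_EE h0 hQ hR j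
          have h9 : EE a j ≤ EE a (j + C) := (Nat.nth_le_nth hQ).2 (by omega)
          omega
      · simp only [Finset.mem_image, Finset.mem_Icc] at hv
        obtain ⟨b, hb, rfl⟩ := hv
        rw [Finset.mem_filter]
        constructor
        · exact ispos hTR (Nat.nth_mem_of_infinite hQ b).1 hxp
            (le_trans ((Nat.nth_le_nth hQ).2 hb.2) hcon.le) hxs
        · intro hmem
          have hneg : a (EE a b + 1) ≤ 0 := (Nat.nth_mem_of_infinite hQ b).2
          have h7 := (hstage _ hneg).1 hmem
          have h8 : FF a j < EE a j := FF_lt_EE h0 hQ hR j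
          have h9 : EE a j ≤ EE a b := (Nat.nth_le_nth hQ).2 (by omega)
          omega
    have hxa : x ∉ (Finset.Icc (j+1) (j+C)).image (EE a) := by
      simp only [Finset.mem_image, Finset.mem_Icc]
      rintro ⟨b, hb, hbe⟩
      have : EE a b ≤ EE a (j + C) := (Nat.nth_le_nth hQ).2 hb.2
      omega
    have hcard : C + 1 ≤ blockCount (sset σ n) := by
      calc C + 1 = (insert x ((Finset.Icc (j+1) (j+C)).image (EE a))).card := by
            rw [Finset.card_insert_of_notMem hxa,
              Finset.card_image_of_injective _ (show Function.Injective (EE a) from Nat.nth_injective hQ), Nat.card_Icc]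
            omega
        _ ≤ _ := Finset.card_le_card hsub
    omega
  have hposset : (sset σ n).filter (fun m => 0 < a m) =
      (Finset.range (x+1)).filter (fun m => 0 < a m) := by
    ext m
    simp only [Finset.mem_filter, Finset.mem_range, Nat.lt_succ_iff]
    constructor
    · rintro ⟨hms, hmp⟩
      exact ⟨hxmax m (Finset.mem_filter.2 ⟨hms, hmp⟩), hmp⟩
    · rintro ⟨hmx, hmp⟩
      exact ⟨ispos hTR hmp hxp hmx hxs, hmp⟩
  have hnegset : (sset σ n).filter (fun m => ¬ 0 < a m) =
      (Finset.range (FF a j + 1)).filter (fun m => ¬ 0 < a m) := by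
    ext m
    simp only [Finset.mem_filter, Finset.mem_range, Nat.lt_succ_iff, not_lt]
    constructor
    · rintro ⟨hms, hmn⟩
      exact ⟨(hstage m hmn).1 hms, hmn⟩
    · rintro ⟨hmx, hmn⟩
      exact ⟨(hstage m hmn).2 hmx, hmn⟩
  refine ⟨x, hxp, hxlow, hxhigh, ?_⟩
  rw [← Finset.sum_filter_add_sum_filter_not (sset σ n) (fun m => 0 < a m) a]
  have e1 : ∑ m ∈ (sset σ n).filter (fun m => 0 < a m), a m = PS a x := by
    rw [hposset, Finset.sum_filter, PS]
    exact Finset.sum_congr rfl (fun m _ => by simp [pp])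
  have e2 : ∑ m ∈ (sset σ n).filter (fun m => ¬ 0 < a m), a m = NS a (FF a j) := by
    rw [hnegset, Finset.sum_filter, NS]
    exact Finset.sum_congr rfl (fun m _ => by simp [np, not_lt])
  rw [e1, e2]

include h0 hQ hR in
lemma stage_decomp_N {σ : Equiv.Perm ℕ} (hTR : IsTypeR a σ) {C : ℕ} (hB : HasBBN σ C)
    (hC : 1 ≤ C) {n j : ℕ} (hj : C + 1 ≤ j)
    (hstage : ∀ m, 0 < a m → (m ∈ sset σ n ↔ m ≤ EE a j)) :
    ∃ y, a y ≤ 0 ∧ FF a (j - C - 1) < y ∧ y ≤ FF a (j + C) ∧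
      (∑ m ∈ sset σ n, a m) = PS a (EE a j) + NS a y := by
  have hBn : blockCount (sset σ n) ≤ C := hB n
  have hlow : ∃ y ∈ sset σ n, a y ≤ 0 ∧ FF a (j - C - 1) < y := by
    by_contra hcon
    push_neg at hcon
    have hsub : (Finset.Icc (j - C) j).image (EE a) ⊆
        (sset σ n).filter (fun v => v + 1 ∉ sset σ n) := by
      intro v hv
      simp only [Finset.mem_image, Finset.mem_Icc] at hv
      obtain ⟨b, hb, rfl⟩ := hv
      rw [Finset.mem_filter]
      refine ⟨(hstage _ (Nat.nth_mem_of_infinite hQ b).1).2 ((Nat.nth_le_nth hQ).2 hb.2), ?_⟩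
      intro hmem
      have hneg : a (EE a b + 1) ≤ 0 := (Nat.nth_mem_of_infinite hQ b).2
      have h4 := hcon _ hmem hneg
      have h5 : FF a (j - C - 1) < EE a (j - C - 1) := FF_lt_EE h0 hQ hR (j - C - 1)
      have h6 : EE a (j - C - 1) ≤ EE a b := (Nat.nth_le_nth hQ).2 (by omega)
      omega
    have hcard : C + 1 ≤ blockCount (sset σ n) := by
      calc C + 1 = ((Finset.Icc (j - C) j).image (EE a)).card := by
            rw [Finset.card_image_of_injective _ (show Function.Injective (EE a) from Nat.nth_injective hQ), Nat.card_Icc]; omega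
        _ ≤ _ := Finset.card_le_card hsub
    omega
  obtain ⟨y₀, hy₀s, hy₀n, hy₀low⟩ := hlow
  have hne : ((sset σ n).filter (fun m => a m ≤ 0)).Nonempty :=
    ⟨y₀, Finset.mem_filter.2 ⟨hy₀s, hy₀n⟩⟩
  obtain ⟨y, hymem, hymax⟩ : ∃ y ∈ (sset σ n).filter (fun m => a m ≤ 0),
      ∀ u ∈ (sset σ n).filter (fun m => a m ≤ 0), u ≤ y :=
    ⟨_, Finset.max'_mem _ hne, fun u hu => Finset.le_max' _ u hu⟩
  rw [Finset.mem_filter] at hymem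
  obtain ⟨hys, hyn⟩ := hymem
  have hylow : FF a (j - C - 1) < y :=
    lt_of_lt_of_le hy₀low (hymax y₀ (Finset.mem_filter.2 ⟨hy₀s, hy₀n⟩))
  have hyhigh : y ≤ FF a (j + C) := by
    by_contra hcon
    push_neg at hcon
    have hsub : insert y ((Finset.Icc (j+1) (j+C)).image (FF a)) ⊆
        (sset σ n).filter (fun v => v + 1 ∉ sset σ n) := by
      intro v hv
      rw [Finset.mem_insert] at hv
      rcases hv with rfl | hv
      · rw [Finset.mem_filter]
        refine ⟨hys, fun hmem => ?_⟩
        rcases le_or_gt (a (v+1)) 0 with hp | hp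
        · have := hymax _ (Finset.mem_filter.2 ⟨hmem, hp⟩); omega
        · have h7 := (hstage _ hp).1 hmem
          have h8 : EE a j < FF a (j+1) := EE_lt_FF_succ h0 hQ hR j
          have h9 : FF a (j+1) ≤ FF a (j + C) := (Nat.nth_le_nth hR).2 (by omega)
          omega
      · simp only [Finset.mem_image, Finset.mem_Icc] at hv
        obtain ⟨b, hb, rfl⟩ := hv
        rw [Finset.mem_filter]
        constructor
        · exact isneg hTR (Nat.nth_mem_of_infinite hR b).1 hyn
            (le_trans ((Nat.nth_le_nth hR).2 hb.2) hcon.le) hys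
        · intro hmem
          have hpos : 0 < a (FF a b + 1) :=
            sign_P h0 hQ hR (Nat.lt_succ_self _) (Nat.succ_le_of_lt (FF_lt_EE h0 hQ hR b))
          have h7 := (hstage _ hpos).1 hmem
          have h8 : EE a j < FF a (j+1) := EE_lt_FF_succ h0 hQ hR j
          have h9 : FF a (j+1) ≤ FF a b := (Nat.nth_le_nth hR).2 (by omega)
          omega
    have hya : y ∉ (Finset.Icc (j+1) (j+C)).image (FF a) := by
      simp only [Finset.mem_image, Finset.mem_Icc]
      rintro ⟨b, hb, hbe⟩
      have : FF a b ≤ FF a (j + C) := (Nat.nth_le_nth hR).2 hb.2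
      omega
    have hcard : C + 1 ≤ blockCount (sset σ n) := by
      calc C + 1 = (insert y ((Finset.Icc (j+1) (j+C)).image (FF a))).card := by
            rw [Finset.card_insert_of_notMem hya,
              Finset.card_image_of_injective _ (show Function.Injective (FF a) from Nat.nth_injective hR), Nat.card_Icc]
            omega
        _ ≤ _ := Finset.card_le_card hsub
    omega
  have hposset : (sset σ n).filter (fun m => 0 < a m) =
      (Finset.range (EE a j + 1)).filter (fun m => 0 < a m) := by
    ext m
    simp only [Finset.mem_filter, Finset.mem_range, Nat.lt_succ_iff]
    constructor
    · rintro ⟨hms, hmp⟩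
      exact ⟨(hstage m hmp).1 hms, hmp⟩
    · rintro ⟨hmx, hmp⟩
      exact ⟨(hstage m hmp).2 hmx, hmp⟩
  have hnegset : (sset σ n).filter (fun m => ¬ 0 < a m) =
      (Finset.range (y + 1)).filter (fun m => ¬ 0 < a m) := by
    ext m
    simp only [Finset.mem_filter, Finset.mem_range, Nat.lt_succ_iff, not_lt]
    constructor
    · rintro ⟨hms, hmn⟩
      exact ⟨hymax m (Finset.mem_filter.2 ⟨hms, hmn⟩), hmn⟩
    · rintro ⟨hmx, hmn⟩
      exact ⟨isneg hTR hmn hyn hmx hys, hmn⟩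
  refine ⟨y, hyn, hylow, hyhigh, ?_⟩
  rw [← Finset.sum_filter_add_sum_filter_not (sset σ n) (fun m => 0 < a m) a]
  have e1 : ∑ m ∈ (sset σ n).filter (fun m => 0 < a m), a m = PS a (EE a j) := by
    rw [hposset, Finset.sum_filter, PS]
    exact Finset.sum_congr rfl (fun m _ => by simp [pp])
  have e2 : ∑ m ∈ (sset σ n).filter (fun m => ¬ 0 < a m), a m = NS a y := by
    rw [hnegset, Finset.sum_filter, NS]
    exact Finset.sum_congr rfl (fun m _ => by simp [np, not_lt])
  rw [e1, e2]

end Stage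

/-! ### Analytic part -/

lemma pp_nonneg (n : ℕ) : 0 ≤ pp a n := by
  rw [pp]; split_ifs with h
  · exact h.le
  · exact le_rfl

lemma np_nonpos (n : ℕ) : np a n ≤ 0 := by
  rw [np]; split_ifs with h
  · exact h
  · exact le_rfl

lemma PS_split {t x : ℕ} (ht : t ≤ x) :
    PS a x = PS a t + ∑ m ∈ Finset.Ioc t x, pp a m := by
  rw [PS, PS, Finset.range_eq_Ico,
    ← Finset.sum_Ico_consecutive (fun m => pp a m) (by omega : 0 ≤ t+1) (by omega : t+1 ≤ x+1)]
  congr 1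
  · rw [Finset.range_eq_Ico]
  rw [Finset.Ico_add_one_add_one_eq_Ioc]

lemma NS_split {t y : ℕ} (ht : t ≤ y) :
    NS a y = NS a t + ∑ m ∈ Finset.Ioc t y, np a m := by
  rw [NS, NS, Finset.range_eq_Ico,
    ← Finset.sum_Ico_consecutive (fun m => np a m) (by omega : 0 ≤ t+1) (by omega : t+1 ≤ y+1)]
  congr 1
  · rw [Finset.range_eq_Ico]
  rw [Finset.Ico_add_one_add_one_eq_Ioc]

lemma PS_window {t x u : ℕ} (ht : t ≤ x) (hx : x ≤ u) :
    PS a t ≤ PS a x ∧ PS a x ≤ PS a t + ∑ m ∈ Finset.Ioc t u, pp a m := by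
  rw [PS_split (a := a) ht]
  have h1 : 0 ≤ ∑ m ∈ Finset.Ioc t x, pp a m := Finset.sum_nonneg (fun m _ => pp_nonneg m)
  have h2 : ∑ m ∈ Finset.Ioc t x, pp a m ≤ ∑ m ∈ Finset.Ioc t u, pp a m :=
    Finset.sum_le_sum_of_subset_of_nonneg (Finset.Ioc_subset_Ioc_right hx)
      (fun m _ _ => pp_nonneg m)
  constructor <;> linarith

lemma NS_window {t y u : ℕ} (ht : t ≤ y) (hy : y ≤ u) :
    NS a t + ∑ m ∈ Finset.Ioc t u, np a m ≤ NS a y ∧ NS a y ≤ NS a t := by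
  rw [NS_split (a := a) ht]
  have h1 : ∑ m ∈ Finset.Ioc t y, np a m ≤ 0 :=
    Finset.sum_nonpos (fun m _ => np_nonpos m)
  have hsplit : ∑ m ∈ Finset.Ioc t u, np a m
      = ∑ m ∈ Finset.Ioc t y, np a m + ∑ m ∈ Finset.Ioc y u, np a m :=
    (Finset.sum_Ioc_consecutive _ ht hy).symm
  have h2 : ∑ m ∈ Finset.Ioc y u, np a m ≤ 0 :=
    Finset.sum_nonpos (fun m _ => np_nonpos m)
  constructor <;> linarith

lemma tends {σ : Equiv.Perm ℕ} {r : ℝ}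
    (hr : Filter.Tendsto (partialSum (fun k => a (σ k))) Filter.atTop (nhds r))
    {δ : ℝ} (hδ : 0 < δ) :
    ∃ N : ℕ, ∀ n ≥ N, |(∑ m ∈ sset σ n, a m) - r| < δ := by
  obtain ⟨N, hN⟩ := Metric.tendsto_atTop.1 hr δ hδ
  refine ⟨N, fun n hn => ?_⟩
  rw [← sum_sset, ← Real.dist_eq]
  exact hN (n+1) (by omega)

section Key
variable (h0 : a 0 ≤ 0) (hQ : (setOf (Qe a)).Infinite) (hR : (setOf (Re a)).Infinite)

include h0 hQ hR in
lemma approx_P {σ : Equiv.Perm ℕ} (hTR : IsTypeR a σ) {C : ℕ} (hB : HasBBN σ C) (hC : 1 ≤ C)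
    {r δ ε : ℝ} {i N : ℕ} (hi : N + C + 2 < i)
    (hwin : ∑ m ∈ Finset.Ioc (EE a (i-2)) (EE a (i + 2*C - 1)), pp a m ≤ ε)
    (hN : ∀ n ≥ N, |(∑ m ∈ sset σ n, a m) - r| < δ) :
    |r - (PS a (EE a (i-2)) + NS a (FF a (i + C - 1)))| ≤ δ + ε := by
  have hw : a (FF a (i + C - 1)) ≤ 0 := (Nat.nth_mem_of_infinite hR (i + C - 1)).1
  obtain ⟨n, hstage⟩ := hit_neg hTR hw
  have hjn : i + C - 1 ≤ n := by
    have hsub : (Finset.range ((i + C - 1)+1)).image (FF a) ⊆ sset σ n := by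
      intro v hv
      simp only [Finset.mem_image, Finset.mem_range, Nat.lt_succ_iff] at hv
      obtain ⟨b, hb, rfl⟩ := hv
      exact (hstage _ (Nat.nth_mem_of_infinite hR b).1).2 ((Nat.nth_le_nth hR).2 hb)
    have hcc := Finset.card_le_card hsub
    rw [Finset.card_image_of_injective _
      (show Function.Injective (FF a) from Nat.nth_injective hR),
      Finset.card_range, card_sset] at hcc
    omega
  obtain ⟨x, hxp, hxlow, hxhigh, hsum⟩ :=
    stage_decomp_P h0 hQ hR hTR hB hC (show C + 1 ≤ i + C - 1 by omega) hstage
  have hTn := hN n (by omega)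
  rw [hsum] at hTn
  have hj1 : i + C - 1 - C - 1 = i - 2 := by omega
  have hj2 : i + C - 1 + C = i + 2*C - 1 := by omega
  rw [hj1] at hxlow
  rw [hj2] at hxhigh
  obtain ⟨hPS1, hPS2⟩ := PS_window (a := a) hxlow.le hxhigh
  have habs := abs_lt.1 hTn
  rw [abs_le]
  constructor <;> [linarith; linarith]

include h0 hQ hR in
lemma approx_N {σ : Equiv.Perm ℕ} (hTR : IsTypeR a σ) {C : ℕ} (hB : HasBBN σ C) (hC : 1 ≤ C)
    {r δ ε : ℝ} {i N : ℕ} (hi : N + C + 2 < i)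
    (hwin : -ε ≤ ∑ m ∈ Finset.Ioc (FF a (i-2)) (FF a (i + 2*C - 1)), np a m)
    (hN : ∀ n ≥ N, |(∑ m ∈ sset σ n, a m) - r| < δ) :
    |r - (PS a (EE a (i + C - 1)) + NS a (FF a (i-2)))| ≤ δ + ε := by
  have hw : 0 < a (EE a (i + C - 1)) := (Nat.nth_mem_of_infinite hQ (i + C - 1)).1
  obtain ⟨n, hstage⟩ := hit_pos hTR hw
  have hjn : i + C - 1 ≤ n := by
    have hsub : (Finset.range ((i + C - 1)+1)).image (EE a) ⊆ sset σ n := by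
      intro v hv
      simp only [Finset.mem_image, Finset.mem_range, Nat.lt_succ_iff] at hv
      obtain ⟨b, hb, rfl⟩ := hv
      exact (hstage _ (Nat.nth_mem_of_infinite hQ b).1).2 ((Nat.nth_le_nth hQ).2 hb)
    have hcc := Finset.card_le_card hsub
    rw [Finset.card_image_of_injective _
      (show Function.Injective (EE a) from Nat.nth_injective hQ),
      Finset.card_range, card_sset] at hcc
    omega
  obtain ⟨y, hyn, hylow, hyhigh, hsum⟩ :=
    stage_decomp_N h0 hQ hR hTR hB hC (show C + 1 ≤ i + C - 1 by omega) hstage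
  have hTn := hN n (by omega)
  rw [hsum] at hTn
  have hj1 : i + C - 1 - C - 1 = i - 2 := by omega
  have hj2 : i + C - 1 + C = i + 2*C - 1 := by omega
  rw [hj1] at hylow
  rw [hj2] at hyhigh
  obtain ⟨hNS1, hNS2⟩ := NS_window (a := a) hylow.le hyhigh
  have habs := abs_lt.1 hTn
  rw [abs_le]
  constructor <;> [linarith; linarith]

include h0 hQ hR in
lemma eq_of_not_STP (hstp : ¬ STP a)
    {σ σ' : Equiv.Perm ℕ} (hTR : IsTypeR a σ) (hTR' : IsTypeR a σ')
    {C : ℕ} (hB : HasBBN σ C) (hB' : HasBBN σ' C) (hC : 1 ≤ C) {r r' : ℝ}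
    (hr : Filter.Tendsto (partialSum (fun k => a (σ k))) Filter.atTop (nhds r))
    (hr' : Filter.Tendsto (partialSum (fun k => a (σ' k))) Filter.atTop (nhds r')) :
    r = r' := by
  by_contra hne
  have hd : 0 < |r - r'| := abs_pos.2 (sub_ne_zero.2 hne)
  set d := |r - r'| with hdd
  obtain ⟨N₁, hN₁⟩ := tends (a := a) hr (show (0:ℝ) < d/8 by linarith)
  obtain ⟨N₂, hN₂⟩ := tends (a := a) hr' (show (0:ℝ) < d/8 by linarith)
  rw [STP] at hstp
  push_neg at hstp
  obtain ⟨i, hi, hSP⟩ := hstp (2*C) (d/8) (by linarith) (max N₁ N₂ + C + 2)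
  have hwin : ∑ m ∈ Finset.Ioc (EE a (i-2)) (EE a (i + 2*C - 1)), pp a m ≤ d/8 := by
    have heq := SP_eq h0 hQ hR (i-2) (2*C)
    have e1 : i - 2 + 2 = i := by omega
    have e3 : i - 2 + 1 + 2*C = i + 2*C - 1 := by omega
    rw [e1, e3] at heq
    rw [← heq]
    exact hSP.le
  have ha1 := approx_P h0 hQ hR hTR hB hC (N := max N₁ N₂)
    (by omega) hwin (fun n hn => hN₁ n (le_trans (le_max_left _ _) hn))
  have ha2 := approx_P h0 hQ hR hTR' hB' hC (N := max N₁ N₂)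
    (by omega) hwin (fun n hn => hN₂ n (le_trans (le_max_right _ _) hn))
  rw [abs_le] at ha1 ha2
  have : |r - r'| ≤ d/2 := by
    rw [abs_le]
    constructor <;> linarith [ha1.1, ha1.2, ha2.1, ha2.2]
  rw [← hdd] at this
  linarith

include h0 hQ hR in
lemma eq_of_not_STN (hstn : ¬ STN a)
    {σ σ' : Equiv.Perm ℕ} (hTR : IsTypeR a σ) (hTR' : IsTypeR a σ')
    {C : ℕ} (hB : HasBBN σ C) (hB' : HasBBN σ' C) (hC : 1 ≤ C) {r r' : ℝ}
    (hr : Filter.Tendsto (partialSum (fun k => a (σ k))) Filter.atTop (nhds r))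
    (hr' : Filter.Tendsto (partialSum (fun k => a (σ' k))) Filter.atTop (nhds r')) :
    r = r' := by
  by_contra hne
  have hd : 0 < |r - r'| := abs_pos.2 (sub_ne_zero.2 hne)
  set d := |r - r'| with hdd
  obtain ⟨N₁, hN₁⟩ := tends (a := a) hr (show (0:ℝ) < d/8 by linarith)
  obtain ⟨N₂, hN₂⟩ := tends (a := a) hr' (show (0:ℝ) < d/8 by linarith)
  rw [STN] at hstn
  push_neg at hstn
  obtain ⟨i, hi, hSN⟩ := hstn (2*C) (d/8) (by linarith) (max N₁ N₂ + C + 2)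
  have hwin : -(d/8) ≤ ∑ m ∈ Finset.Ioc (FF a (i-2)) (FF a (i + 2*C - 1)), np a m := by
    have heq := SN_eq h0 hQ hR (i-2) (2*C)
    have e1 : i - 2 + 2 = i := by omega
    have e3 : i - 2 + 1 + 2*C = i + 2*C - 1 := by omega
    rw [e1, e3] at heq
    rw [← heq]
    exact hSN.le
  have ha1 := approx_N h0 hQ hR hTR hB hC (N := max N₁ N₂)
    (by omega) hwin (fun n hn => hN₁ n (le_trans (le_max_left _ _) hn))
  have ha2 := approx_N h0 hQ hR hTR' hB' hC (N := max N₁ N₂)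
    (by omega) hwin (fun n hn => hN₂ n (le_trans (le_max_right _ _) hn))
  rw [abs_le] at ha1 ha2
  have : |r - r'| ≤ d/2 := by
    rw [abs_le]
    constructor <;> linarith [ha1.1, ha1.2, ha2.1, ha2.2]
  rw [← hdd] at this
  linarith

end Key
end St11


/-- If a series (with `a 0 ≤ 0`, infinitely many positive and
nonpositive terms) has two type R λ-permutations with distinct sums, then it
satisfies both `ST_P` and `ST_N`. -/
theorem statement11 (a : ℕ → ℝ) (h0 : a 0 ≤ 0)
    (hP : {n : ℕ | 0 < a n}.Infinite) (hN : {n : ℕ | a n ≤ 0}.Infinite)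
    (σ₁ σ₂ : Equiv.Perm ℕ) (r₁ r₂ : ℝ)
    (h₁ : IsTypeRLambda a σ₁) (h₂ : IsTypeRLambda a σ₂)
    (hr₁ : ConvergesTo (fun n => a (σ₁ n)) r₁)
    (hr₂ : ConvergesTo (fun n => a (σ₂ n)) r₂)
    (hne : r₁ ≠ r₂) :
    STP a ∧ STN a := by
  obtain ⟨hTR₁, ⟨C₁, hB₁⟩, -⟩ := h₁
  obtain ⟨hTR₂, ⟨C₂, hB₂⟩, -⟩ := h₂
  have hQ : (setOf (St11.Qe a)).Infinite := St11.Qe_infinite hP hN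
  have hR : (setOf (St11.Re a)).Infinite := St11.Re_infinite hP hN
  have hB₁' : HasBBN σ₁ (max C₁ C₂ + 1) :=
    fun n => le_trans (hB₁ n) (by have := le_max_left C₁ C₂; omega)
  have hB₂' : HasBBN σ₂ (max C₁ C₂ + 1) :=
    fun n => le_trans (hB₂ n) (by have := le_max_right C₁ C₂; omega)
  have hC : 1 ≤ max C₁ C₂ + 1 := Nat.le_add_left 1 _
  constructor
  · by_contra hstp
    exact hne (St11.eq_of_not_STP h0 hQ hR hstp hTR₁ hTR₂ hB₁' hB₂' hC hr₁ hr₂)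
  · by_contra hstn
    exact hne (St11.eq_of_not_STN h0 hQ hR hstn hTR₁ hTR₂ hB₁' hB₂' hC hr₁ hr₂)
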